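/- Let A ∈ ℝ^{m×n}, let J = [[0, A], [−Aᵀ, 0]] ∈ ℝ^{(m+n)×(m+n)}, let y ∈ ℝ^{m+n}, let x ∈ Δ_m × Δ_n ⊂ ℝ^{m+n}, and set y' = y + Jx. If x attains the maximum in Ψ(y'), i.e., ⟨x, y'⟩ = Ψ(y'), then Ψ(y') ≤ Ψ(y). (This is the key one-step energy non-increase property of Optimistic Fictitious Play when the maximizer at the predicted dual vector coincides with the maximizer at the true next dual vector.) -/

import Mathlib

open Matrix

/-- The energy function `Ψ(y₁, y₂) = max_{(x₁,x₂) ∈ Δ_m × Δ_n} (⟨x₁,y₁⟩ + ⟨x₂,y₂⟩)`.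
In block form, `Ψ(y) = max_{x ∈ Δ_m × Δ_n} ⟨x, y⟩` and the block matrix
`J = [[0, A], [−Aᵀ, 0]]` acts on `x = (x₁, x₂)` by `Jx = (A x₂, −Aᵀ x₁)`. -/
noncomputable def energy {m n : ℕ} (y₁ : Fin m → ℝ) (y₂ : Fin n → ℝ) : ℝ :=
  ⨆ p : ↥(stdSimplex ℝ (Fin m)) × ↥(stdSimplex ℝ (Fin n)),
    (p.1 : Fin m → ℝ) ⬝ᵥ y₁ + (p.2 : Fin n → ℝ) ⬝ᵥ y₂

/-- with `y' = y + Jx`, if `x ∈ Δ_m × Δ_n` attains the maximum in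
`Ψ(y')`, i.e. `⟨x, y'⟩ = Ψ(y')`, then `Ψ(y') ≤ Ψ(y)`. -/
theorem ofp_one_step_energy_nonincrease
    {m n : ℕ} (A : Matrix (Fin m) (Fin n) ℝ)
    (y₁ : Fin m → ℝ) (y₂ : Fin n → ℝ) (x₁ : Fin m → ℝ) (x₂ : Fin n → ℝ)
    (hx₁ : x₁ ∈ stdSimplex ℝ (Fin m)) (hx₂ : x₂ ∈ stdSimplex ℝ (Fin n))
    (y₁' : Fin m → ℝ) (y₂' : Fin n → ℝ)
    (hy₁' : y₁' = y₁ + A.mulVec x₂) (hy₂' : y₂' = y₂ - Aᵀ.mulVec x₁)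
    (hmax : x₁ ⬝ᵥ y₁' + x₂ ⬝ᵥ y₂' = energy y₁' y₂') :
    energy y₁' y₂' ≤ energy y₁ y₂ := by
  have hskew : x₁ ⬝ᵥ A.mulVec x₂ = x₂ ⬝ᵥ Aᵀ.mulVec x₁ := by
    simp only [dotProduct, Matrix.mulVec, Matrix.transpose_apply, Finset.mul_sum]
    rw [Finset.sum_comm]
    simp [dotProduct, mul_comm, mul_left_comm]
  have hval : x₁ ⬝ᵥ y₁' + x₂ ⬝ᵥ y₂' = x₁ ⬝ᵥ y₁ + x₂ ⬝ᵥ y₂ := by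
    subst hy₁' hy₂'
    simp only [dotProduct_add, dotProduct_sub, hskew]
    ring
  rw [← hmax, hval]
  haveI : CompactSpace ↥(stdSimplex ℝ (Fin m)) :=
    isCompact_iff_compactSpace.mp (isCompact_stdSimplex _ _)
  haveI : CompactSpace ↥(stdSimplex ℝ (Fin n)) :=
    isCompact_iff_compactSpace.mp (isCompact_stdSimplex _ _)
  have hcont : Continuous fun p : ↥(stdSimplex ℝ (Fin m)) × ↥(stdSimplex ℝ (Fin n)) =>
      (p.1 : Fin m → ℝ) ⬝ᵥ y₁ + (p.2 : Fin n → ℝ) ⬝ᵥ y₂ := by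
    unfold dotProduct
    exact Continuous.add
      (continuous_finset_sum _ fun i _ => ((continuous_apply i).comp (continuous_subtype_val.comp continuous_fst)).mul continuous_const)
      (continuous_finset_sum _ fun i _ => ((continuous_apply i).comp (continuous_subtype_val.comp continuous_snd)).mul continuous_const)
  exact le_ciSup (isCompact_range hcont).bddAbove (⟨⟨x₁, hx₁⟩, ⟨x₂, hx₂⟩⟩)
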